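/- (Base case of the 2-versus-1,1 positivity) Let μ_1 and μ_2 each be either a nonempty sequence of positive integers or the sequence 0,0. Then N[μ_1,2,μ_2,2] > N[μ_1,1,1,μ_2]. -/

import Mathlib

/-- head-recursion continuant -/
def contAux : List ℕ → ℕ
  | [] => 1
  | [a] => a
  | a :: b :: l => a * contAux (b :: l) + contAux l

/-- continuant `N[a₁,...,aₙ]`, satisfying `N[] = 1`, `N[a] = a`,
`N[a₁,...,aₙ] = aₙ·N[a₁,...,aₙ₋₁] + N[a₁,...,aₙ₋₂]`. -/
def contN (l : List ℕ) : ℕ := contAux l.reverse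


/-- μ is either a nonempty sequence of positive integers or the sequence 0,0 -/
def OkSeq (μ : List ℕ) : Prop := (μ ≠ [] ∧ ∀ x ∈ μ, 0 < x) ∨ μ = [0, 0]

def contD (l : List ℕ) : ℕ := if l = [] then 0 else contAux l.dropLast

lemma contAux_cons (a : ℕ) (l : List ℕ) (hl : l ≠ []) :
    contAux (a :: l) = a * contAux l + contAux l.tail := by
  match l with
  | [] => simp at hl
  | b :: t => rfl

lemma contD_cons_cons (a b : ℕ) (l : List ℕ) :
    contD (a :: b :: l) = a * contD (b :: l) + contD l := by
  match l with
  | [] => simp [contD, contAux]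
  | c :: t =>
    simp only [contD, if_neg (by simp : ¬(a :: b :: c :: t = [])),
      if_neg (by simp : ¬(b :: c :: t = [])), if_neg (by simp : ¬(c :: t = []))]
    show contAux (a :: b :: (c :: t).dropLast) = _
    have hb : (b :: c :: t).dropLast = b :: (c :: t).dropLast := rfl
    rw [hb]
    cases h : (c :: t).dropLast with
    | nil => simp [contAux]
    | cons d s => rfl

lemma contAux_append (x y : List ℕ) (hy : y ≠ []) :
    contAux (x ++ y) = contAux x * contAux y + contD x * contAux y.tail := by
  induction x using contAux.induct with
  | case1 => simp [contD, contAux]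
  | case2 a =>
    match y, hy with
    | b :: t, _ =>
      show contAux (a :: b :: t) = _
      simp [contAux, contD]
  | case3 a b l ih1 ih2 =>
    have e : contAux ((a :: b :: l) ++ y) =
        a * contAux ((b :: l) ++ y) + contAux (l ++ y) := rfl
    rw [e, ih1, ih2, contD_cons_cons]
    show _ = (a * contAux (b :: l) + contAux l) * contAux y + _
    ring

lemma contAux_pos (l : List ℕ) (h : ∀ x ∈ l, 0 < x) : 1 ≤ contAux l := by
  induction l using contAux.induct with
  | case1 => simp [contAux]
  | case2 a => exact h a (by simp)
  | case3 a b l ih1 ih2 =>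
    have ha := h a (by simp)
    have h1 := ih1 (fun x hx => h x (by simp [hx]))
    show 1 ≤ a * contAux (b :: l) + contAux l
    have : 1 ≤ a * contAux (b :: l) := Nat.one_le_iff_ne_zero.mpr (by positivity)
    omega

lemma ok_one_le (v : List ℕ) (h : (∀ x ∈ v, 0 < x) ∨ v = [0, 0]) :
    1 ≤ contAux v := by
  rcases h with h | h
  · exact contAux_pos v h
  · subst h; decide

lemma ok_tail_le (v : List ℕ) (h : (∀ x ∈ v, 0 < x) ∨ v = [0, 0]) :
    contAux v.tail ≤ contAux v := by
  rcases h with h | h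
  · match v with
    | [] => simp
    | [a] => exact h a (by simp)
    | a :: b :: t =>
      have ha := h a (by simp)
      show contAux (b :: t) ≤ a * contAux (b :: t) + contAux t
      nlinarith [contAux (b :: t), contAux t]
  · subst h; decide

theorem stmt_12 (μ₁ μ₂ : List ℕ) (h₁ : OkSeq μ₁) (h₂ : OkSeq μ₂) :
    contN (μ₁ ++ [2] ++ μ₂ ++ [2]) > contN (μ₁ ++ [1, 1] ++ μ₂) := by
  set v := μ₁.reverse with hvdef
  set u := μ₂.reverse with hudef
  have hv : v ≠ [] ∧ ((∀ x ∈ v, 0 < x) ∨ v = [0, 0]) := by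
    rcases h₁ with ⟨hne, hp⟩ | h
    · exact ⟨by rw [hvdef]; simpa using hne, Or.inl (by rw [hvdef]; simpa using hp)⟩
    · refine ⟨by simp [hvdef, h], Or.inr (by simp [hvdef, h])⟩
  have hu : u ≠ [] ∧ ((∀ x ∈ u, 0 < x) ∨ u = [0, 0]) := by
    rcases h₂ with ⟨hne, hp⟩ | h
    · exact ⟨by rw [hudef]; simpa using hne, Or.inl (by rw [hudef]; simpa using hp)⟩
    · refine ⟨by simp [hudef, h], Or.inr (by simp [hudef, h])⟩
  obtain ⟨hvne, hvok⟩ := hv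
  obtain ⟨hune, huok⟩ := hu
  have lhs_eq : contN (μ₁ ++ [2] ++ μ₂ ++ [2]) = contAux (2 :: (u ++ 2 :: v)) := by
    simp [contN, List.reverse_append, hvdef, hudef]
  have rhs_eq : contN (μ₁ ++ [1, 1] ++ μ₂) = contAux (u ++ 1 :: 1 :: v) := by
    simp [contN, List.reverse_append, hvdef, hudef]
  rw [lhs_eq, rhs_eq]
  set A := contAux v with hA
  set At := contAux v.tail with hAt
  set B := contAux u with hB
  set Bd := contD u with hBd
  have hA1 : 1 ≤ A := ok_one_le v hvok
  have hB1 : 1 ≤ B := ok_one_le u huok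
  have hAtA : At ≤ A := ok_tail_le v hvok
  have h2v : contAux (2 :: v) = 2 * A + At := contAux_cons 2 v hvne
  have h1v : contAux (1 :: v) = A + At := by rw [contAux_cons 1 v hvne]; ring
  have h11v : contAux (1 :: 1 :: v) = 2 * A + At := by
    rw [contAux_cons 1 (1 :: v) (by simp), h1v]
    simp only [List.tail_cons, ← hA]
    ring
  have hP : contAux (u ++ 2 :: v) = B * (2 * A + At) + Bd * A := by
    rw [contAux_append u (2 :: v) (by simp), h2v]
    simp [← hA, ← hB, ← hBd]
  have hR : contAux (u ++ 1 :: 1 :: v) = B * (2 * A + At) + Bd * (A + At) := by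
    rw [contAux_append u (1 :: 1 :: v) (by simp), h11v]
    simp only [List.tail_cons, h1v, ← hB, ← hBd]
  have hL : 2 * contAux (u ++ 2 :: v) ≤ contAux (2 :: (u ++ 2 :: v)) := by
    rw [contAux_cons 2 (u ++ 2 :: v) (by simp [hune])]
    omega
  rw [hR]
  have : B * (2 * A + At) + Bd * (A + At) < 2 * (B * (2 * A + At) + Bd * A) := by
    nlinarith
  omega
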